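/- Let GF(2^r) be partitioned into G1 = {0, 1, α, …, α^{m−2}} and G2 = {α^{m−1}, …, α^{2^r−2}} with m ≤ 2^{r−1} and n = 2^r − m. Let B = [λ_i + δ_j] over GF(2^r) with λ_i ∈ G1, δ_j ∈ G2. Then for 1 ≤ t < 2^r − 1, rank(B^{∘t}) = min(m, 2^{ω(t)}), where ω(t) is the binary weight of t. -/

import Mathlib

open Finset

lemma digitsSum_eq (t : ℕ) : (Nat.digits 2 t).sum = t.bitIndices.length := by
  induction t using Nat.strong_induction_on with
  | _ t ih =>
  rcases Nat.eq_zero_or_pos t with rfl | ht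
  · simp
  rcases Nat.even_or_odd t with ⟨c, hc⟩ | ⟨c, hc⟩
  · subst hc
    have hc0 : 0 < c := by omega
    rw [show c + c = 2 * c by ring, Nat.bitIndices_two_mul,
      Nat.digits_def' (by norm_num) (by omega)]
    simp [Nat.mul_div_cancel_left, ih c (by omega)]
  · subst hc
    rw [Nat.bitIndices_two_mul_add_one, Nat.digits_def' (by norm_num) (by omega)]
    rw [show (2*c+1)/2 = c by omega]
    simp [ih c (by omega), Nat.add_comm]

lemma sum_two_pow (r : ℕ) : ∑ i ∈ Finset.range r, 2 ^ i = 2 ^ r - 1 := by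
  induction r with
  | zero => simp
  | succ r ih =>
    rw [Finset.sum_range_succ, ih]
    have : 1 ≤ 2 ^ r := Nat.one_le_two_pow
    omega

lemma rank_submatrix_le' {R : Type*} [Field R] {m n : Type*} [Fintype m] [Fintype n]
    [DecidableEq n] {k l : ℕ} (A : Matrix m n R) (f : Fin k → m) (g : Fin l → n) :
    (A.submatrix f g).rank ≤ A.rank := by
  classical
  set G : Matrix n (Fin l) R := Matrix.of (fun j u => if g u = j then (1:R) else 0) with hG
  have hAG : A.submatrix f g = (A * G).submatrix f id := by
    ext i u
    simp [Matrix.mul_apply, hG, Matrix.submatrix_apply]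
  rw [hAG]
  have h1 : ((A * G).submatrix f id).rank ≤ (A * G).rank := by
    have : ((A * G).submatrix f id).mulVecLin =
        (LinearMap.funLeft R R f).comp (A * G).mulVecLin := by
      ext x i
      simp [Matrix.mulVecLin, Matrix.mulVec, Matrix.submatrix_apply, dotProduct, Matrix.mul_apply,
        Pi.single_apply, eq_comm]
    rw [Matrix.rank, this, LinearMap.range_comp, Matrix.rank]
    exact (Submodule.finrank_map_le _ _)
  exact h1.trans (Matrix.rank_mul_le_left A G)

lemma char2_expand {F : Type*} [Field F] [CharP F 2] (t : ℕ) (x y : F) :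
    (x + y) ^ t = ∑ T ∈ t.bitIndices.toFinset.powerset,
      x ^ (∑ i ∈ T, 2 ^ i) * y ^ (t - ∑ i ∈ T, 2 ^ i) := by
  haveI : Fact (Nat.Prime 2) := ⟨Nat.prime_two⟩
  set I := t.bitIndices.toFinset with hIdef
  have hI : ∑ i ∈ I, 2 ^ i = t := twoPowSum_toFinset_bitIndices t
  calc (x + y) ^ t = ∏ i ∈ I, ((x ^ 2 ^ i) + (y ^ 2 ^ i)) := by
        rw [← hI, ← Finset.prod_pow_eq_pow_sum]
        exact Finset.prod_congr rfl fun i _ => add_pow_char_pow ..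
    _ = ∑ T ∈ I.powerset, (∏ i ∈ T, x ^ 2 ^ i) * ∏ i ∈ I \ T, y ^ 2 ^ i :=
        Finset.prod_add _ _ _
    _ = _ := by
        refine Finset.sum_congr rfl fun T hT => ?_
        rw [Finset.mem_powerset] at hT
        rw [Finset.prod_pow_eq_pow_sum, Finset.prod_pow_eq_pow_sum]
        have h2 : (∑ i ∈ I \ T, 2 ^ i) + ∑ i ∈ T, 2 ^ i = t :=
          (Finset.sum_sdiff (f := fun i => 2 ^ i) hT).trans hI
        have h3 : ∑ i ∈ I \ T, 2 ^ i = t - ∑ i ∈ T, 2 ^ i := by omega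
        rw [h3]

theorem stmt16 {r m n : ℕ} (hr : 0 < r) (hm : 1 ≤ m) (hm2 : m ≤ 2 ^ (r - 1))
    (hn : n = 2 ^ r - m)
    {F : Type*} [Field F] [Fintype F] [CharP F 2] (hF : Fintype.card F = 2 ^ r)
    (α : F) (hα : orderOf α = 2 ^ r - 1)
    (lam : Fin m → F)
    (hlam : ∀ i : Fin m, lam i = if (i : ℕ) = 0 then 0 else α ^ ((i : ℕ) - 1))
    (del : Fin n → F) (hdel : ∀ j : Fin n, del j = α ^ (m - 1 + (j : ℕ)))
    (t : ℕ) (ht1 : 1 ≤ t) (ht2 : t < 2 ^ r - 1) :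
    (Matrix.of fun i j => (lam i + del j) ^ t).rank =
      min m (2 ^ (Nat.digits 2 t).sum) := by
  classical
  set I : Finset ℕ := t.bitIndices.toFinset with hIdef
  set w : ℕ := I.card with hwdef
  have hw : (Nat.digits 2 t).sum = w := by
    rw [digitsSum_eq, hwdef, hIdef, List.toFinset_card_of_nodup Nat.bitIndices_sorted.nodup]
  set θ : ℕ := 2 ^ w with hθdef
  have hθpos : 0 < θ := Nat.pow_pos (by norm_num)
  haveI : NeZero θ := ⟨hθpos.ne'⟩
  -- the exponent set S
  set S : Finset ℕ := I.powerset.image (fun T => ∑ i ∈ T, 2 ^ i) with hSdef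
  have hinj : Function.Injective (fun T : Finset ℕ => ∑ i ∈ T, 2 ^ i) :=
    Finset.geomSum_injective (le_refl 2)
  have hScard : S.card = θ := by
    rw [hSdef, Finset.card_image_of_injective _ hinj, Finset.card_powerset]
  have hIt : ∑ i ∈ I, 2 ^ i = t := twoPowSum_toFinset_bitIndices t
  have hsle : ∀ s ∈ S, s ≤ t := by
    intro s hs
    rw [hSdef, Finset.mem_image] at hs
    obtain ⟨T, hT, rfl⟩ := hs
    rw [Finset.mem_powerset] at hT
    calc ∑ i ∈ T, 2 ^ i ≤ ∑ i ∈ I, 2 ^ i :=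
          Finset.sum_le_sum_of_subset hT
      _ = t := hIt
  have h0S : (0 : ℕ) ∈ S := by
    rw [hSdef, Finset.mem_image]
    exact ⟨∅, by simp⟩
  -- the enumeration
  set ε := S.orderIsoOfFin hScard with hε
  set e : Fin θ → ℕ := fun u => (ε u : ℕ) with hedef
  have hemono : StrictMono e := fun a b hab => by
    simpa [hedef] using (ε.strictMono hab)
  have heinj : Function.Injective e := hemono.injective
  have heS : ∀ u, e u ∈ S := fun u => (ε u).2
  have he0 : e 0 = 0 := by
    obtain ⟨u, hu⟩ := ε.surjective ⟨0, h0S⟩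
    have h1 : e u = 0 := by rw [hedef]; simp [hu]
    have h2 : e 0 ≤ e u := hemono.monotone (Fin.zero_le u)
    omega
  have helt : ∀ u, e u ≤ t := fun u => hsle _ (heS u)
  -- basic facts about α
  have hq1 : 1 ≤ 2 ^ r - 1 := by
    have : (2:ℕ) ^ 1 ≤ 2 ^ r := Nat.pow_le_pow_right (by norm_num) hr
    omega
  have hα0 : α ≠ 0 := by
    intro h
    have h1 := pow_orderOf_eq_one α
    rw [hα, h] at h1
    rw [zero_pow (by omega)] at h1
    exact zero_ne_one h1
  have powinj : ∀ a b : ℕ, a < 2 ^ r - 1 → b < 2 ^ r - 1 → α ^ a = α ^ b → a = b := by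
    intro a b ha hb hab
    set u : Fˣ := Units.mk0 α hα0 with hu
    have hval : ∀ c : ℕ, ((u ^ c : Fˣ) : F) = α ^ c := fun c => by
      rw [Units.val_pow_eq_pow_val]; rfl
    have hupow : u ^ a = u ^ b := Units.ext (by rw [hval, hval]; exact hab)
    have hord : orderOf u = 2 ^ r - 1 := by
      rw [← hα, ← orderOf_units]; rfl
    have h1 := (pow_eq_pow_iff_modEq).mp hupow
    rw [hord] at h1
    unfold Nat.ModEq at h1
    rw [Nat.mod_eq_of_lt ha, Nat.mod_eq_of_lt hb] at h1
    exact h1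
  -- θ ≤ n
  have hIr : I ⊆ Finset.range r := by
    intro i hi
    rw [hIdef, List.mem_toFinset] at hi
    have h1 : 2 ^ i ≤ t := Nat.two_pow_le_of_mem_bitIndices hi
    have h2 : 2 ^ i < 2 ^ r := by omega
    rw [Finset.mem_range]
    exact (Nat.pow_lt_pow_iff_right (by norm_num)).mp h2
  have hwr : w ≤ r - 1 := by
    by_contra hcon
    push_neg at hcon
    have hwle : w ≤ r := by
      calc w ≤ (Finset.range r).card := Finset.card_le_card hIr
        _ = r := Finset.card_range r
    have hweq : w = r := by omega
    have hIeq : I = Finset.range r := by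
      apply Finset.eq_of_subset_of_card_le hIr
      rw [Finset.card_range, ← hwdef, hweq]
    have : t = 2 ^ r - 1 := by
      rw [← hIt, hIeq, sum_two_pow]
    omega
  have h2r : 2 ^ r = 2 ^ (r - 1) * 2 := by
    rw [← pow_succ]
    congr 1
    omega
  have hθhalf : θ ≤ 2 ^ (r - 1) := Nat.pow_le_pow_right (by norm_num) hwr
  have hθn : θ ≤ n := by omega
  -- the factorization
  set VL : Matrix (Fin m) (Fin θ) F := Matrix.of (fun i u => lam i ^ e u) with hVL
  set VR : Matrix (Fin θ) (Fin n) F := Matrix.of (fun u j => del j ^ (t - e u)) with hVR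
  have key : ∀ x y : F, (x + y) ^ t = ∑ u : Fin θ, x ^ e u * y ^ (t - e u) := by
    intro x y
    rw [char2_expand t x y, ← hIdef]
    calc ∑ T ∈ I.powerset, x ^ (∑ i ∈ T, 2 ^ i) * y ^ (t - ∑ i ∈ T, 2 ^ i)
        = ∑ s ∈ S, x ^ s * y ^ (t - s) := by
          rw [hSdef, Finset.sum_image (fun a _ b _ h => hinj h)]
      _ = ∑ s : {a // a ∈ S}, x ^ (s : ℕ) * y ^ (t - (s : ℕ)) :=
          (Finset.sum_coe_sort _ _).symm
      _ = ∑ u : Fin θ, x ^ e u * y ^ (t - e u) := by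
          rw [← Equiv.sum_comp ε.toEquiv
            (fun s : {a // a ∈ S} => x ^ (s : ℕ) * y ^ (t - (s : ℕ)))]
          rfl
  have hfact : (Matrix.of fun i j => (lam i + del j) ^ t) = VL * VR := by
    ext i j
    rw [Matrix.mul_apply]
    simp only [hVL, hVR, Matrix.of_apply]
    exact key (lam i) (del j)
  -- V_R has full row rank, hence surjective
  set z : Fin θ → F := fun u => α ^ (t - e u) with hz
  have hzinj : Function.Injective z := by
    intro u v huv
    have h1 : t - e u = t - e v := powinj _ _ (by have := helt u; omega)
      (by have := helt v; omega) huv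
    have := helt u; have := helt v
    exact heinj (by omega)
  set Z : Matrix (Fin θ) (Fin θ) F :=
    VR.submatrix id (fun u : Fin θ => (⟨u, lt_of_lt_of_le u.2 hθn⟩ : Fin n)) with hZ
  have hZeq : Z = Matrix.diagonal (fun u => z u ^ (m - 1)) * Matrix.vandermonde z := by
    ext u v
    rw [hZ, Matrix.submatrix_apply, hVR]
    simp only [Matrix.of_apply, Matrix.mul_apply, Matrix.diagonal_apply, Matrix.vandermonde]
    rw [Finset.sum_eq_single u (fun b _ hb => by simp [hb.symm]) (by simp)]
    simp only [if_pos rfl, hdel, hz, Matrix.of_apply]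
    rw [pow_right_comm, pow_add]
    simp [hz]
  have hZdet : Z.det ≠ 0 := by
    rw [hZeq, Matrix.det_mul, Matrix.det_diagonal, Matrix.det_vandermonde]
    apply mul_ne_zero
    · exact Finset.prod_ne_zero_iff.mpr fun u _ =>
        pow_ne_zero _ (pow_ne_zero _ hα0)
    · refine Finset.prod_ne_zero_iff.mpr fun i _ => Finset.prod_ne_zero_iff.mpr fun j hj => ?_
      rw [Finset.mem_Ioi] at hj
      exact sub_ne_zero.mpr fun h => hj.ne' (hzinj h)
  have hZrank : Z.rank = θ := by
    rw [Matrix.rank_of_isUnit Z ((Matrix.isUnit_iff_isUnit_det Z).mpr hZdet.isUnit),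
      Fintype.card_fin]
  have hVRrank : VR.rank = θ := by
    apply le_antisymm
    · simpa using VR.rank_le_card_height
    · calc θ = Z.rank := hZrank.symm
        _ ≤ VR.rank := by rw [hZ]; exact rank_submatrix_le' VR _ _
  have hsurj : Function.Surjective VR.mulVecLin := by
    rw [← LinearMap.range_eq_top]
    apply Submodule.eq_top_of_finrank_eq
    rw [← Matrix.rank, hVRrank, Module.finrank_fintype_fun_eq_card, Fintype.card_fin]
  -- rank A = rank VL
  have hrankA : (Matrix.of fun i j => (lam i + del j) ^ t).rank = VL.rank := by
    rw [hfact, Matrix.rank, Matrix.rank, Matrix.mulVecLin_mul, LinearMap.range_comp,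
      LinearMap.range_eq_top.mpr hsurj, Submodule.map_top]
  -- rank VL = min m θ
  have hVLub : VL.rank ≤ min m θ := by
    refine le_min ?_ ?_
    · simpa using VL.rank_le_card_height
    · simpa using VL.rank_le_card_width
  have hVLlb : min m θ ≤ VL.rank := by
    have hk : 1 ≤ min m θ := le_min hm hθpos
    obtain ⟨k', hk'⟩ : ∃ k', min m θ = k' + 1 := ⟨min m θ - 1, by omega⟩
    have hkm : k' + 1 ≤ m := hk' ▸ min_le_left m θ
    have hkθ : k' + 1 ≤ θ := hk' ▸ min_le_right m θ
    set f : Fin (k' + 1) → Fin m := fun v => ⟨v, by have := v.2; omega⟩ with hf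
    set g : Fin (k' + 1) → Fin θ := fun v => ⟨v, by have := v.2; omega⟩ with hg
    set W := VL.submatrix f g with hWdef
    have hg0 : g 0 = 0 := by
      apply Fin.ext
      simp [hg, Fin.val_zero]
    have hguv : ∀ u v : Fin (k' + 1), g u = g v → u = v := by
      intro u v huv
      have : (g u : ℕ) = (g v : ℕ) := by rw [huv]
      simp [hg] at this
      exact Fin.ext this
    have hW0 : ∀ u : Fin (k' + 1), W 0 u = if u = 0 then 1 else 0 := by
      intro u
      have hlam0 : lam (f 0) = 0 := by rw [hlam]; simp [hf]
      rw [hWdef, Matrix.submatrix_apply, hVL]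
      simp only [Matrix.of_apply]
      rw [hlam0]
      by_cases hu : u = 0
      · subst hu
        rw [hg0, he0, pow_zero, if_pos rfl]
      · have hne : e (g u) ≠ 0 := by
          intro h
          exact hu (hguv u 0 (heinj (by rw [h, hg0, he0])))
        rw [zero_pow hne, if_neg hu]
    set ζ : Fin k' → F := fun u => α ^ e (g u.succ) with hζ
    have hζinj : Function.Injective ζ := by
      intro u v huv
      have h1 : e (g u.succ) = e (g v.succ) := powinj _ _
        (by have := helt (g u.succ); omega) (by have := helt (g v.succ); omega) huv
      have h2 := hguv _ _ (heinj h1)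
      exact Fin.succ_injective _ h2
    set M := W.submatrix Fin.succ Fin.succ with hM
    have hMeq : M = (Matrix.vandermonde ζ).transpose := by
      ext i u
      rw [hM, Matrix.submatrix_apply, hWdef, Matrix.submatrix_apply, hVL]
      simp only [Matrix.of_apply, Matrix.transpose_apply, Matrix.vandermonde]
      have hfv : ((f i.succ : Fin m) : ℕ) = (i : ℕ) + 1 := by simp [hf]
      rw [hlam, hfv]
      simp only [Nat.add_sub_cancel, if_neg (Nat.succ_ne_zero _)]
      rw [pow_right_comm]
    have hMdet : M.det ≠ 0 := by
      rw [hMeq, Matrix.det_transpose, Matrix.det_vandermonde]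
      refine Finset.prod_ne_zero_iff.mpr fun i _ => Finset.prod_ne_zero_iff.mpr fun j hj => ?_
      rw [Finset.mem_Ioi] at hj
      exact sub_ne_zero.mpr fun h => hj.ne' (hζinj h)
    have hWdet : W.det ≠ 0 := by
      rw [Matrix.det_succ_row_zero]
      rw [Finset.sum_eq_single_of_mem 0 (Finset.mem_univ _)
        (fun b _ hb => by rw [hW0, if_neg hb]; ring)]
      rw [hW0, if_pos rfl]
      simpa [Fin.succAbove_zero, ← hM] using hMdet
    have hWrank : W.rank = k' + 1 := by
      rw [Matrix.rank_of_isUnit W ((Matrix.isUnit_iff_isUnit_det W).mpr hWdet.isUnit),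
        Fintype.card_fin]
    rw [hk']
    calc k' + 1 = W.rank := hWrank.symm
      _ ≤ VL.rank := by rw [hWdef]; exact rank_submatrix_le' VL f g
  rw [hrankA, hw]
  exact le_antisymm hVLub hVLlb
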